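/- Let D₁ ⊆ ℝ and D₂ ⊆ ℝ be closed, φ : ℝ² → ℝ continuously differentiable, D := {(x̄, x̃) ∈ ℝ² : x̄ ∈ D₁, φ(x̄, x̃) ∈ D₂}, and let x = (x̄, x̃) be a boundary point of D with ∂₂φ(x) ≠ 0. Let C : ℝ² → S² be differentiable at x, b = (b̄, b̃) : ℝ² → ℝ², and let u := (ū, 0) with ū ∈ N¹_{D₁}(x̄) (the case ũ = 0). Then the conditions [C(x)u = 0 and ⟨u, b(x) − ½ Σ_{j=1}^2 D(Ce_j)(x)(P_C(x)e_j)⟩ ≤ 0] hold if and only if: [ū ≠ 0 implies C(x) = C₂₂(x)·[[0,0],[0,1]]] and ū · ( b̄(x) − ½ 𝟙_{C₂₂(x) ≠ 0} ∂₂C₁₂(x) ) ≤ 0. -/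

import Mathlib

open Matrix Set Asymptotics
open scoped RealInnerProductSpace NNReal

noncomputable section

/-- `ℝ^d` with the Euclidean inner product and norm. -/
abbrev Vec (d : ℕ) := EuclideanSpace ℝ (Fin d)

/-- real `d × d` matrices. -/
abbrev Mat (d : ℕ) := Matrix (Fin d) (Fin d) ℝ

attribute [local instance] Matrix.normedAddCommGroup Matrix.normedSpace

/-- A matrix acting on a vector of `ℝ^d`. -/
def mv {d : ℕ} (A : Mat d) (u : Vec d) : Vec d := WithLp.toLp 2 (A.mulVec u)

/-- The `j`-th canonical basis vector of `ℝ^d`. -/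
def evec {d : ℕ} (j : Fin d) : Vec d := EuclideanSpace.single j 1

/-- The first-order normal cone `N¹_D(x)`. -/
def normalCone1 {d : ℕ} (D : Set (Vec d)) (x : Vec d) : Set (Vec d) :=
  {u | ∀ ε > (0:ℝ), ∃ δ > (0:ℝ), ∀ y ∈ D, ‖y - x‖ ≤ δ → ⟪u, y - x⟫ ≤ ε * ‖y - x‖}

/-- The second-order normal cone `N²_D(x) ⊆ ℝ^d × S^d`. -/
def normalCone2 {d : ℕ} (D : Set (Vec d)) (x : Vec d) : Set (Vec d × Mat d) :=
  {p | p.2.IsSymm ∧ ∀ ε > (0:ℝ), ∃ δ > (0:ℝ), ∀ y ∈ D, ‖y - x‖ ≤ δ →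
    ⟪p.1, y - x⟫ + (1/2:ℝ) * ⟪y - x, mv p.2 (y - x)⟫ ≤ ε * ‖y - x‖^2}

/-- The first-order normal cone for subsets of `ℝ`. -/
def normalConeR (D : Set ℝ) (x : ℝ) : Set ℝ :=
  {u | ∀ ε > (0:ℝ), ∃ δ > (0:ℝ), ∀ y ∈ D, |y - x| ≤ δ → u * (y - x) ≤ ε * |y - x|}

/-- The matrix of the orthogonal projection of `ℝ^d` onto the column space (range) of `A`,
i.e. `A A⁺` with `A⁺` the Moore–Penrose pseudoinverse. -/
def projRange {d : ℕ} (A : Mat d) : Mat d :=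
  Matrix.toEuclideanLin.symm
    (((LinearMap.range (Matrix.toEuclideanLin A)).subtypeL.comp
      ((LinearMap.range (Matrix.toEuclideanLin A)).orthogonalProjectionOnto)).toLinearMap)

/-- The element of `ℝ²` with the two given coordinates. -/
def vec2 (a b : ℝ) : Vec 2 := WithLp.toLp 2 ![a, b]

/-- The Hessian matrix of `φ : ℝ^d → ℝ` at `x`. -/
def hessMat {d : ℕ} (φ : Vec d → ℝ) (x : Vec d) : Mat d :=
  Matrix.of fun i j => fderiv ℝ (fun y => fderiv ℝ φ y (evec j)) x (evec i)

-- test: mv as CLM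
def mvCLM {d : ℕ} (w : Vec d) : Mat d →L[ℝ] Vec d :=
  LinearMap.toContinuousLinearMap
    { toFun := fun A => mv A w
      map_add' := fun A B => by
        ext i; simp [mv, Matrix.add_mulVec]
      map_smul' := fun c A => by
        ext i; simp [mv, Matrix.smul_mulVec] }

def entCLM (i j : Fin 2) : Mat 2 →L[ℝ] ℝ :=
  LinearMap.toContinuousLinearMap
    { toFun := fun A => A i j
      map_add' := fun A B => rfl
      map_smul' := fun c A => rfl }

lemma mv_projRange {d : ℕ} (A : Mat d) (w : Vec d) :
    mv (projRange A) w =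
      (Submodule.orthogonalProjectionOnto (LinearMap.range (Matrix.toEuclideanLin A)) w : Vec d) := by
  have h : Matrix.toEuclideanLin (projRange A) =
      (((LinearMap.range (Matrix.toEuclideanLin A)).subtypeL.comp
      (Submodule.orthogonalProjectionOnto (LinearMap.range (Matrix.toEuclideanLin A)))).toLinearMap) :=
    LinearEquiv.apply_symm_apply _ _
  have h2 : mv (projRange A) w = Matrix.toEuclideanLin (projRange A) w := rfl
  rw [h2, h]; rfl

lemma mvCLM_apply {d : ℕ} (w : Vec d) (A : Mat d) : mvCLM w A = mv A w := rfl

lemma fderiv_mv (C : Vec 2 → Mat 2) (x : Vec 2) (hC : DifferentiableAt ℝ C x)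
    (w v : Vec 2) : fderiv ℝ (fun y => mv (C y) w) x v = mv (fderiv ℝ C x v) w := by
  have h := ((mvCLM w).hasFDerivAt.comp x hC.hasFDerivAt).fderiv
  have heq : (fun y => mv (C y) w) = (mvCLM w) ∘ C := rfl
  rw [heq, h]; rfl

lemma fderiv_ent (C : Vec 2 → Mat 2) (x : Vec 2) (hC : DifferentiableAt ℝ C x)
    (i j : Fin 2) (v : Vec 2) :
    fderiv ℝ (fun y => C y i j) x v = fderiv ℝ C x v i j := by
  have h := ((entCLM i j).hasFDerivAt.comp x hC.hasFDerivAt).fderiv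
  have heq : (fun y => C y i j) = (entCLM i j) ∘ C := rfl
  rw [heq, h]; rfl

lemma toEuclideanLin_apply' (A : Mat 2) (v : Vec 2) :
    Matrix.toEuclideanLin A v = WithLp.toLp 2 (A *ᵥ v) := rfl

lemma evec_apply (j i : Fin 2) : (evec j : Vec 2) i = if i = j then 1 else 0 := by
  simp [evec, EuclideanSpace.single_apply]

-- projection computations
lemma proj_smulE_e0 (c : ℝ) :
    mv (projRange (c • !![(0:ℝ),0;0,1])) (evec 0) = 0 := by
  rw [mv_projRange]
  have hmem : (evec 0 : Vec 2) ∈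
      (LinearMap.range (Matrix.toEuclideanLin (c • !![(0:ℝ),0;0,1])))ᗮ := by
    rw [Submodule.mem_orthogonal]
    rintro v ⟨z, rfl⟩
    rw [toEuclideanLin_apply']
    simp only [evec]
    rw [EuclideanSpace.inner_single_right]
    simp [Matrix.mulVec, dotProduct, Fin.sum_univ_two]
  rw [Submodule.orthogonalProjectionOnto_apply_of_mem_orthogonal hmem]
  rfl

lemma proj_smulE_e1 (c : ℝ) (hc : c ≠ 0) :
    mv (projRange (c • !![(0:ℝ),0;0,1])) (evec 1) = evec 1 := by
  rw [mv_projRange]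
  rw [← Submodule.starProjection_apply, Submodule.starProjection_eq_self_iff.2]
  exact ⟨c⁻¹ • evec 1, by
    rw [toEuclideanLin_apply']
    ext i
    fin_cases i <;>
      simp [Matrix.mulVec, dotProduct, Fin.sum_univ_two, evec,
        EuclideanSpace.single_apply, hc]⟩

lemma proj_zero (w : Vec 2) : mv (projRange (0 : Mat 2)) w = 0 := by
  rw [mv_projRange]
  have hmem : w ∈ (LinearMap.range (Matrix.toEuclideanLin (0 : Mat 2)))ᗮ := by
    rw [Submodule.mem_orthogonal]
    rintro v ⟨z, rfl⟩
    rw [toEuclideanLin_apply']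
    simp [Matrix.zero_mulVec]
  rw [Submodule.orthogonalProjectionOnto_apply_of_mem_orthogonal hmem]
  rfl

lemma inner_vec2_left (a : ℝ) (v : Vec 2) : ⟪(vec2 a 0 : Vec 2), v⟫ = a * v 0 := by
  simp [vec2, PiLp.inner_apply, Fin.sum_univ_two, mul_comm]

lemma mv_vec2 (A : Mat 2) (a : ℝ) :
    mv A (vec2 a 0) = vec2 (A 0 0 * a) (A 1 0 * a) := by
  ext i
  fin_cases i <;> simp [mv, Matrix.mulVec, dotProduct, Fin.sum_univ_two, vec2]

lemma vec2_eq_zero_iff (a b : ℝ) : (vec2 a b : Vec 2) = 0 ↔ a = 0 ∧ b = 0 := by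
  constructor
  · intro h
    constructor
    · have := congrArg (fun v : Vec 2 => v 0) h; simpa [vec2] using this
    · have := congrArg (fun v : Vec 2 => v 1) h; simpa [vec2] using this
  · rintro ⟨rfl, rfl⟩
    ext i; fin_cases i <;> simp [vec2]

lemma cond1_iff (A : Mat 2) (hA : A.IsSymm) (a : ℝ) (ha : a ≠ 0) :
    mv A (vec2 a 0) = 0 ↔ A = A 1 1 • !![0, 0; 0, 1] := by
  rw [mv_vec2, vec2_eq_zero_iff, mul_eq_zero, mul_eq_zero]
  constructor
  · rintro ⟨h00 | h, h10 | h⟩ <;> try exact absurd h ha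
    ext i j
    fin_cases i <;> fin_cases j <;>
      simp [h00, h10, ← hA.apply 0 1]
  · intro h
    constructor <;> left <;> rw [h] <;> simp

lemma sum_formula (C : Vec 2 → Mat 2) (x : Vec 2) (hC : DifferentiableAt ℝ C x)
    (hC1 : C x = C x 1 1 • !![0,0;0,1]) :
    (∑ j, fderiv ℝ (fun y => mv (C y) (evec j)) x (mv (projRange (C x)) (evec j))) 0
      = (if C x 1 1 ≠ 0 then (1:ℝ) else 0) *
        fderiv ℝ (fun y => C y 0 1) x (evec 1) := by
  by_cases hc : C x 1 1 = 0
  · have h0 : C x = 0 := by rw [hC1, hc, zero_smul]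
    have e0 : mv (projRange (C x)) (evec 0) = 0 := by rw [h0]; exact proj_zero _
    have e1 : mv (projRange (C x)) (evec 1) = 0 := by rw [h0]; exact proj_zero _
    rw [Fin.sum_univ_two, e0, e1, (fderiv ℝ (fun y => mv (C y) (evec 0)) x).map_zero,
      (fderiv ℝ (fun y => mv (C y) (evec 1)) x).map_zero]
    simp [hc]
  · have e0 : mv (projRange (C x)) (evec 0) = 0 := by rw [hC1]; exact proj_smulE_e0 _
    have e1 : mv (projRange (C x)) (evec 1) = evec 1 := by
      rw [hC1]; exact proj_smulE_e1 _ hc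
    rw [Fin.sum_univ_two, e0, e1, (fderiv ℝ (fun y => mv (C y) (evec 0)) x).map_zero,
      fderiv_mv C x hC (evec 1) (evec 1), fderiv_ent C x hC 0 1 (evec 1)]
    simp [hc, mv, Matrix.mulVec, dotProduct, Fin.sum_univ_two, evec_apply]

/-- equivalent form of the first-order conditions at a boundary point of
`D = {(x̄, x̃) : x̄ ∈ D₁, φ(x̄, x̃) ∈ D₂}` for a normal direction with `ũ = 0`. -/
theorem stmt7 (D₁ D₂ : Set ℝ) (hD₁ : IsClosed D₁) (hD₂ : IsClosed D₂)
    (φ : Vec 2 → ℝ) (hφ : ContDiff ℝ 1 φ)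
    (D : Set (Vec 2)) (hD : D = {p : Vec 2 | p 0 ∈ D₁ ∧ φ p ∈ D₂})
    (x : Vec 2) (hx : x ∈ frontier D) (hnd : fderiv ℝ φ x (evec 1) ≠ 0)
    (C : Vec 2 → Mat 2) (hCsymm : ∀ y, (C y).IsSymm) (hCdiff : DifferentiableAt ℝ C x)
    (b : Vec 2 → Vec 2)
    (ub : ℝ) (hub : ub ∈ normalConeR D₁ (x 0))
    (u : Vec 2) (hu : u = vec2 ub 0) :
    (mv (C x) u = 0 ∧
      ⟪u, b x - (1/2 : ℝ) •
        ∑ j, fderiv ℝ (fun y => mv (C y) (evec j)) x (mv (projRange (C x)) (evec j))⟫ ≤ 0)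
    ↔
    ((ub ≠ 0 → C x = C x 1 1 • !![0, 0; 0, 1]) ∧
      ub * ((b x) 0 - (1/2 : ℝ) * (if C x 1 1 ≠ 0 then (1:ℝ) else 0) *
        fderiv ℝ (fun y => C y 0 1) x (evec 1)) ≤ 0) := by
  subst hu
  set S := ∑ j, fderiv ℝ (fun y => mv (C y) (evec j)) x (mv (projRange (C x)) (evec j))
    with hSdef
  have hcomp : ∀ v : Vec 2, ⟪(vec2 ub 0 : Vec 2), b x - (1/2 : ℝ) • v⟫
      = ub * ((b x) 0 - (1/2:ℝ) * v 0) := by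
    intro v
    rw [inner_vec2_left]
    norm_num
  by_cases hubz : ub = 0
  · subst hubz
    have hu0 : (vec2 0 0 : Vec 2) = 0 := (vec2_eq_zero_iff 0 0).2 ⟨rfl, rfl⟩
    rw [hu0]
    have hz : mv (C x) 0 = 0 := by
      ext i; simp [mv, Matrix.mulVec, dotProduct]
    constructor
    · rintro -
      exact ⟨fun h => absurd rfl h, by simp⟩
    · rintro -
      exact ⟨hz, by simp⟩
  · constructor
    · rintro ⟨h1, h2⟩
      have hC1 := (cond1_iff (C x) (hCsymm x) ub hubz).1 h1
      refine ⟨fun _ => hC1, ?_⟩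
      have hS0 : S 0 = (if C x 1 1 ≠ 0 then (1:ℝ) else 0) *
          fderiv ℝ (fun y => C y 0 1) x (evec 1) := sum_formula C x hCdiff hC1
      rw [hcomp, hS0] at h2
      linarith [h2]
    · rintro ⟨h1, h2⟩
      have hC1 := h1 hubz
      refine ⟨(cond1_iff (C x) (hCsymm x) ub hubz).2 hC1, ?_⟩
      have hS0 : S 0 = (if C x 1 1 ≠ 0 then (1:ℝ) else 0) *
          fderiv ℝ (fun y => C y 0 1) x (evec 1) := sum_formula C x hCdiff hC1
      rw [hcomp, hS0]
      linarith [h2]
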